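/- For any countable tree T, the boundary ∂T equipped with the shadow topology is a Baire space. -/

import Mathlib

open Filter Set

section PowersDefs

/-- A Powers group: for every finite `F ⊆ Γ \ {1}` and every `N ≥ 1` there is a partition
`Γ = C ⊔ D` (here `D = Cᶜ`) and elements `g 1, …, g N` with `fC ∩ C = ∅` for `f ∈ F` and
`g j D ∩ g k D = ∅` for `j ≠ k`. -/
def IsPowersGroup (Γ : Type*) [Group Γ] : Prop :=
  Nontrivial Γ ∧
    ∀ F : Finset Γ, (1 : Γ) ∉ F → ∀ N : ℕ, 1 ≤ N →
      ∃ (C : Set Γ) (g : Fin N → Γ),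
        (∀ f ∈ F, (fun x => f * x) '' C ∩ C = ∅) ∧
        ∀ j k : Fin N, j ≠ k →
          (fun x => g j * x) '' Cᶜ ∩ (fun x => g k * x) '' Cᶜ = ∅

/-- A subgroup is subnormal if there is a finite chain of successively normal subgroups
reaching the whole group. -/
def IsSubnormalIn {Γ : Type*} [Group Γ] (N : Subgroup Γ) : Prop :=
  ∃ (k : ℕ) (c : ℕ → Subgroup Γ), c 0 = N ∧ c k = ⊤ ∧
    ∀ i < k, c i ≤ c (i + 1) ∧ ∀ x ∈ c (i + 1), ∀ y ∈ c i, x * y * x⁻¹ ∈ c i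

/-- A strongly Powers group: every nontrivial subnormal subgroup is a Powers group. -/
def IsStronglyPowersGroup (Γ : Type*) [Group Γ] : Prop :=
  ∀ N : Subgroup Γ, IsSubnormalIn N → N ≠ ⊥ → IsPowersGroup N

end PowersDefs

section TreeDefs

variable {V : Type*}

/-- A ray in a graph: a sequence of vertices with `d(x m, x n) = |m - n|`. -/
def IsRay (G : SimpleGraph V) (x : ℕ → V) : Prop :=
  ∀ m n : ℕ, G.dist (x m) (x n) = ((m : ℤ) - (n : ℤ)).natAbs

/-- Two rays are cofinal if up to an index shift they eventually coincide. -/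
def Cofinal (x y : ℕ → V) : Prop :=
  ∃ a b : ℕ, ∀ᶠ n in atTop, y (n + a) = x (n + b)

/-- The type of rays of a graph. -/
def Ray (G : SimpleGraph V) : Type _ := {x : ℕ → V // IsRay G x}

/-- The boundary of a tree: cofinality classes of rays. -/
def Boundary (G : SimpleGraph V) : Type _ :=
  Quot (fun r s : Ray G => Cofinal r.1 s.1)

/-- The boundary point represented by a ray. -/
def Boundary.mk (G : SimpleGraph V) (r : Ray G) : Boundary G := Quot.mk _ r

/-- The shadow of the oriented edge `(u, v)`: boundary points represented by rays that are
eventually strictly closer to `v` than to `u`. -/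
def Shadow (G : SimpleGraph V) (u v : V) : Set (Boundary G) :=
  {ξ | ∃ r : Ray G, Boundary.mk G r = ξ ∧
    ∀ᶠ n in atTop, G.dist v (r.1 n) < G.dist u (r.1 n)}

/-- The shadow topology on the boundary of a tree. -/
instance (G : SimpleGraph V) : TopologicalSpace (Boundary G) :=
  TopologicalSpace.generateFrom {s | ∃ u v : V, G.Adj u v ∧ s = Shadow G u v}

/-- The action of `Γ` on the vertices is by graph automorphisms. -/
def IsGraphAction (G : SimpleGraph V) (Γ : Type*) [Group Γ] [MulAction Γ V] : Prop :=
  ∀ (γ : Γ) (u v : V), G.Adj u v ↔ G.Adj (γ • u) (γ • v)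

variable {Γ : Type*} [Group Γ] [MulAction Γ V]

theorem dist_smul_eq {G : SimpleGraph V} (h : IsGraphAction G Γ) (γ : Γ) (u v : V) :
    G.dist (γ • u) (γ • v) = G.dist u v := by
  have key : ∀ (g : Γ) (a b : V), G.dist (g • a) (g • b) ≤ G.dist a b := by
    intro g a b
    by_cases hr : G.Reachable a b
    · obtain ⟨w, hw⟩ := hr.exists_walk_length_eq_dist
      have hle : G.dist (g • a) (g • b) ≤
          (w.map ⟨fun x => g • x, fun hx => (h g _ _).mp hx⟩).length :=
        SimpleGraph.dist_le _
      rwa [SimpleGraph.Walk.length_map, hw] at hle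
    · have hr2 : ¬ G.Reachable (g • a) (g • b) := by
        intro hc
        refine hr ?_
        have h' := hc.map (⟨fun x => g⁻¹ • x, fun hx => (h g⁻¹ _ _).mp hx⟩ : G →g G)
        have h'' : G.Reachable (g⁻¹ • (g • a)) (g⁻¹ • (g • b)) := h'
        simpa using h''
      rw [SimpleGraph.dist_eq_zero_of_not_reachable hr,
        SimpleGraph.dist_eq_zero_of_not_reachable hr2]
  refine le_antisymm (key γ u v) ?_
  have h2 := key γ⁻¹ (γ • u) (γ • v)
  simpa using h2

/-- The image of a ray under an automorphism. -/
def raySmul {G : SimpleGraph V} (h : IsGraphAction G Γ) (γ : Γ) (r : Ray G) : Ray G :=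
  ⟨fun n => γ • r.1 n, fun m n => by rw [dist_smul_eq h]; exact r.2 m n⟩

/-- The induced action of an automorphism on the boundary. -/
def Boundary.smul {G : SimpleGraph V} (h : IsGraphAction G Γ) (γ : Γ) :
    Boundary G → Boundary G :=
  Quot.map (raySmul h γ) (by
    rintro r s ⟨a, b, hab⟩
    exact ⟨a, b, hab.mono fun n hn => by simp only [raySmul, hn]⟩)

/-- The fixed-point set of `γ` on the boundary. -/
def FixedBoundary {G : SimpleGraph V} (h : IsGraphAction G Γ) (γ : Γ) :
    Set (Boundary G) :=
  {ξ | Boundary.smul h γ ξ = ξ}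

/-- A slender action: every nontrivial element has a fixed-point set with empty interior in
the boundary. -/
def SlenderAction {G : SimpleGraph V} (h : IsGraphAction G Γ) : Prop :=
  ∀ γ : Γ, γ ≠ 1 → interior (FixedBoundary h γ) = ∅

/-- A minimal action on a tree: no nonempty proper invariant subtree. -/
def MinimalTreeAction (G : SimpleGraph V) (Γ : Type*) [Group Γ] [MulAction Γ V] : Prop :=
  ∀ S : Set V, S.Nonempty → (∀ (γ : Γ), ∀ v ∈ S, γ • v ∈ S) →
    (G.induce S).Connected → S = Set.univ

/-- An inversion of a graph. -/
def IsInversionAut (G : SimpleGraph V) (γ : Γ) : Prop :=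
  ∃ u v : V, G.Adj u v ∧ γ • u = v ∧ γ • v = u

/-- An elliptic automorphism: one fixing a vertex. -/
def IsEllipticAut (V : Type*) [MulAction Γ V] (γ : Γ) : Prop := ∃ v : V, γ • v = v

/-- A hyperbolic automorphism: neither elliptic nor an inversion. -/
def IsHyperbolicAut (G : SimpleGraph V) (γ : Γ) : Prop :=
  ¬ IsEllipticAut V γ ∧ ¬ IsInversionAut G γ

/-- The axis of an automorphism: the set of vertices minimizing the displacement
`d(x, γ x)`. -/
def Axis (G : SimpleGraph V) (γ : Γ) : Set V :=
  {x : V | ∀ y : V, G.dist x (γ • x) ≤ G.dist y (γ • y)}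

/-- Two automorphisms are transverse if the intersection of their axes is finite. -/
def Transverse (G : SimpleGraph V) (γ δ : Γ) : Prop :=
  (Axis G γ ∩ Axis G δ).Finite

/-- A strongly hyperbolic action on a tree: it admits a pair of transverse hyperbolic
elements. -/
def StronglyHyperbolicTreeAction (G : SimpleGraph V) (Γ : Type*) [Group Γ] [MulAction Γ V] :
    Prop :=
  ∃ γ δ : Γ, IsHyperbolicAut G γ ∧ IsHyperbolicAut G δ ∧ Transverse G γ δ

/-- A pending ray: a ray whose vertices eventually all have degree two. -/
def IsPendingRay (G : SimpleGraph V) (x : ℕ → V) : Prop :=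
  IsRay G x ∧ ∀ᶠ n in atTop, (G.neighborSet (x n)).ncard = 2

/-- A linear tree: its vertex set is an enumeration `(x n), n ∈ ℤ` with
`d(x m, x n) = |m - n|`. -/
def IsLinearTree (G : SimpleGraph V) : Prop :=
  ∃ x : ℤ → V, Function.Surjective x ∧
    ∀ m n : ℤ, G.dist (x m) (x n) = (m - n).natAbs

end TreeDefs


namespace TreeBaire
variable {V : Type*} {G : SimpleGraph V}

lemma path_length_eq (hT : G.IsTree) {a b : V} {p : G.Walk a b} (hp : p.IsPath) :
    p.length = G.dist a b := by
  classical
  obtain ⟨w, hw⟩ := (hT.isConnected a b).exists_walk_length_eq_dist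
  have hbp : w.bypass.IsPath := w.bypass_isPath
  have hlen : w.bypass.length = G.dist a b :=
    le_antisymm (hw ▸ w.length_bypass_le) (SimpleGraph.dist_le _)
  have := (hT.existsUnique_path a b).unique hp hbp
  rw [this, hlen]

lemma dist_support_le {a b z : V} {p : G.Walk a b} (hz : z ∈ p.support) :
    G.dist a z + G.dist z b ≤ p.length := by
  classical
  have hspec := p.take_spec hz
  calc G.dist a z + G.dist z b ≤ (p.takeUntil z hz).length + (p.dropUntil z hz).length :=
        Nat.add_le_add (SimpleGraph.dist_le _) (SimpleGraph.dist_le _)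
    _ = p.length := by rw [← SimpleGraph.Walk.length_append, hspec]

lemma exists_geod (hT : G.IsTree) (a b : V) :
    ∃ p : G.Walk a b, p.IsPath ∧ p.length = G.dist a b := by
  classical
  obtain ⟨w, hw⟩ := (hT.isConnected a b).exists_walk_length_eq_dist
  exact ⟨w.bypass, w.bypass_isPath,
    le_antisymm (hw ▸ w.length_bypass_le) (SimpleGraph.dist_le _)⟩

lemma isPath_concat {u v w : V} {p : G.Walk u v} (hp : p.IsPath) (h : G.Adj v w)
    (hw : w ∉ p.support) : (p.concat h).IsPath := by
  rw [← SimpleGraph.Walk.isPath_reverse_iff, SimpleGraph.Walk.reverse_concat]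
  exact hp.reverse.cons (by simpa using hw)

lemma adj_dist_cases (hT : G.IsTree) {u v : V} (huv : G.Adj u v) (z : V) :
    G.dist u z = G.dist v z + 1 ∨ G.dist v z = G.dist u z + 1 := by
  obtain ⟨p, hp, hl⟩ := exists_geod hT z u
  by_cases hv : v ∈ p.support
  · left
    have h1 := dist_support_le hv
    rw [hl] at h1
    have h2 : G.dist v u = 1 := SimpleGraph.dist_eq_one_iff_adj.2 huv.symm
    have h3 : G.dist z u ≤ G.dist z v + 1 := by
      calc G.dist z u ≤ G.dist z v + G.dist v u := (hT.isConnected).dist_triangle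
        _ = G.dist z v + 1 := by rw [h2]
    rw [SimpleGraph.dist_comm (u := u), SimpleGraph.dist_comm (u := v)]
    omega
  · right
    have hq : (p.concat huv).IsPath := isPath_concat hp huv hv
    have := path_length_eq hT hq
    rw [SimpleGraph.Walk.length_concat, hl] at this
    rw [SimpleGraph.dist_comm (u := v), SimpleGraph.dist_comm (u := u)]
    omega

lemma dist_eq_zero (hT : G.IsTree) {a b : V} (h : G.dist a b = 0) : a = b := by
  rcases SimpleGraph.dist_eq_zero_iff_eq_or_not_reachable.1 h with h | h
  · exact h
  · exact absurd (hT.isConnected a b) h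


/-- crossing lemma: an edge crossing the cut of edge (u,v) is (u,v) itself. -/
lemma cross (hT : G.IsTree) {u v z z' : V} (huv : G.Adj u v) (hzz' : G.Adj z z')
    (h1 : G.dist u z < G.dist v z) (h2 : G.dist v z' < G.dist u z') : z = u ∧ z' = v := by
  have e1 : G.dist v z = G.dist u z + 1 := by rcases adj_dist_cases hT huv z with h | h <;> omega
  have e2 : G.dist u z' = G.dist v z' + 1 := by rcases adj_dist_cases hT huv z' with h | h <;> omega
  set a := G.dist u z with ha
  have e3 : G.dist u z' = a + 1 := by
    rcases adj_dist_cases hT hzz' u with h | h <;>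
    rcases adj_dist_cases hT hzz' v with h' | h' <;>
      rw [SimpleGraph.dist_comm (u := z)] at h <;>
      rw [SimpleGraph.dist_comm (u := z)] at h' <;>
      rw [SimpleGraph.dist_comm (u := z')] at h h' <;> omega
  have e4 : G.dist v z' = a := by omega
  -- show a = 0
  have ha0 : a = 0 := by
    by_contra hne
    have hpos : 1 ≤ a := Nat.one_le_iff_ne_zero.2 hne
    obtain ⟨p, hp, hlp⟩ := exists_geod hT u z   -- length a
    obtain ⟨q, hq, hlq⟩ := exists_geod hT v z'  -- length a
    have hdzz' : G.dist z z' = 1 := SimpleGraph.dist_eq_one_iff_adj.2 hzz'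
    -- P = cons (v,u) p : path v → z
    have hvp : v ∉ p.support := by
      intro hmem
      have := dist_support_le hmem
      have hduv : G.dist u v = 1 := SimpleGraph.dist_eq_one_iff_adj.2 huv
      rw [hlp] at this
      omega
    have hP : (SimpleGraph.Walk.cons huv.symm p).IsPath := hp.cons hvp
    -- Q = q.concat (z',z) : path v → z
    have hzq : z ∉ q.support := by
      intro hmem
      have := dist_support_le hmem
      rw [hlq] at this
      rw [SimpleGraph.dist_comm (u := z)] at hdzz'
      omega
    have hQ : (q.concat hzz'.symm).IsPath := isPath_concat hq hzz'.symm hzq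
    have hPQ := (hT.existsUnique_path v z).unique hP hQ
    -- z' ∈ Q.support, hence z' ∈ P.support
    have hz'Q : z' ∈ (q.concat hzz'.symm).support := by
      rw [SimpleGraph.Walk.support_concat]
      exact List.mem_append.2 (Or.inl q.end_mem_support)
    rw [← hPQ] at hz'Q
    rw [SimpleGraph.Walk.support_cons] at hz'Q
    rcases List.mem_cons.1 hz'Q with h | h
    · have h0 : G.dist v v = 0 := SimpleGraph.dist_self
      rw [h] at e4; omega
    · have := dist_support_le h
      rw [hlp] at this
      omega
  refine ⟨dist_eq_zero hT (by rw [SimpleGraph.dist_comm]; omega), ?_⟩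
  exact dist_eq_zero hT (by rw [SimpleGraph.dist_comm]; omega)

/-- cut lemma -/
lemma cut_aux (hT : G.IsTree) {u v y : V} (huv : G.Adj u v) :
    ∀ {x : V} (w : G.Walk x y), G.dist u x < G.dist v x → G.dist v y < G.dist u y →
      G.dist x u + 1 + G.dist v y ≤ w.length := by
  intro x w
  induction w with
  | nil => intro h1 h2; omega
  | @cons x x₁ y h w' ih =>
    intro h1 h2
    rcases adj_dist_cases hT huv x₁ with hc | hc
    · -- x₁ closer to v : crossing, so x = u, x₁ = v
      obtain ⟨hxu, hx₁v⟩ := cross hT huv h h1 (by omega)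
      have hle : G.dist x₁ y ≤ w'.length := SimpleGraph.dist_le _
      have hself : G.dist x u = 0 := by rw [hxu]; exact SimpleGraph.dist_self
      have hvy : G.dist v y = G.dist x₁ y := by rw [hx₁v]
      simp only [SimpleGraph.Walk.length_cons]
      omega
    · -- x₁ still closer to u
      have hih := ih (by omega) h2
      have htri : G.dist x u ≤ 1 + G.dist x₁ u := by
        have h1' : G.dist x x₁ = 1 := SimpleGraph.dist_eq_one_iff_adj.2 h
        calc G.dist x u ≤ G.dist x x₁ + G.dist x₁ u := (hT.isConnected).dist_triangle
          _ = 1 + G.dist x₁ u := by rw [h1']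
      simp only [SimpleGraph.Walk.length_cons]
      omega

/-- the side of the edge (u,v) containing v -/
def Side (G : SimpleGraph V) (u v : V) : Set V := {z | G.dist v z < G.dist u z}

lemma cut (hT : G.IsTree) {u v x y : V} (huv : G.Adj u v)
    (hx : G.dist u x < G.dist v x) (hy : G.dist v y < G.dist u y) :
    G.dist x y = G.dist x u + 1 + G.dist v y := by
  obtain ⟨w, _, hl⟩ := exists_geod hT x y
  have h1 : G.dist x u + 1 + G.dist v y ≤ G.dist x y := hl ▸ cut_aux hT huv w hx hy
  have h2 : G.dist x y ≤ G.dist x u + 1 + G.dist v y := by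
    have t1 : G.dist x y ≤ G.dist x u + G.dist u y := (hT.isConnected).dist_triangle
    have t2 : G.dist u y ≤ G.dist u v + G.dist v y := (hT.isConnected).dist_triangle
    have h3 : G.dist u v = 1 := SimpleGraph.dist_eq_one_iff_adj.2 huv
    omega
  omega

lemma side_convex (hT : G.IsTree) {u v p q z : V} (huv : G.Adj u v)
    (hp : p ∈ Side G u v) (hq : q ∈ Side G u v)
    (hz : G.dist p z + G.dist z q = G.dist p q) : z ∈ Side G u v := by
  simp only [Side, Set.mem_setOf_eq] at hp hq ⊢
  rcases adj_dist_cases hT huv z with hc | hc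
  · omega
  · exfalso
    have c1 : G.dist z p = G.dist z u + 1 + G.dist v p := cut hT huv (by omega) hp
    have c2 : G.dist z q = G.dist z u + 1 + G.dist v q := cut hT huv (by omega) hq
    have t : G.dist p q ≤ G.dist p v + G.dist v q := (hT.isConnected).dist_triangle
    have s1 : G.dist z p = G.dist p z := SimpleGraph.dist_comm
    have s2 : G.dist p v = G.dist v p := SimpleGraph.dist_comm
    omega

lemma side_nested (hT : G.IsTree) {u v x y : V} (huv : G.Adj u v) (hxy : G.Adj x y)
    (hx : x ∈ Side G u v) (hy : y ∈ Side G u v) (hu : G.dist u y = G.dist u x + 1) :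
    Side G x y ⊆ Side G u v := by
  intro z hz
  simp only [Side, Set.mem_setOf_eq] at hz hx hy ⊢
  have hux : G.dist x u < G.dist y u := by
    rw [SimpleGraph.dist_comm (u := x), SimpleGraph.dist_comm (u := y)]; omega
  have c1 : G.dist u z = G.dist u x + 1 + G.dist y z := cut hT hxy hux hz
  have e1 : G.dist u y = G.dist v y + 1 := by
    rcases adj_dist_cases hT huv y with h | h <;> omega
  have t : G.dist v z ≤ G.dist v y + G.dist y z := (hT.isConnected).dist_triangle
  omega


section RayLemmas
variable {r : ℕ → V} (hr : IsRay G r)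

include hr

lemma ray_dist (m n : ℕ) (h : m ≤ n) : G.dist (r m) (r n) = n - m := by
  have := hr m n
  omega

lemma ray_adj (n : ℕ) : G.Adj (r n) (r (n + 1)) := by
  refine SimpleGraph.dist_eq_one_iff_adj.1 ?_
  have := hr n (n + 1); omega

lemma ray_incr_step (hT : G.IsTree) (w : V) {n : ℕ}
    (h : G.dist w (r (n + 1)) = G.dist w (r n) + 1) :
    G.dist w (r (n + 2)) = G.dist w (r (n + 1)) + 1 := by
  rcases adj_dist_cases hT (ray_adj hr (n+1)).symm w with hc | hc
  · rw [SimpleGraph.dist_comm (u := r (n+2)), SimpleGraph.dist_comm (u := r (n+1))] at hc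
    omega
  · -- bad case : dist w r(n+2) = dist w r(n+1) - 1 = dist w (r n)
    exfalso
    rw [SimpleGraph.dist_comm (u := r (n+2)), SimpleGraph.dist_comm (u := r (n+1))] at hc
    set d := G.dist w (r n) with hd
    have h2 : G.dist w (r (n+2)) = d := by omega
    obtain ⟨p, hp, hlp⟩ := exists_geod hT w (r n)
    obtain ⟨q, hq, hlq⟩ := exists_geod hT w (r (n+2))
    have hd1 : G.dist (r n) (r (n+1)) = 1 := by have := hr n (n+1); omega
    have hd2 : G.dist (r (n+2)) (r (n+1)) = 1 := by have := hr (n+2) (n+1); omega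
    have hd3 : G.dist (r n) (r (n+2)) = 2 := by have := hr n (n+2); omega
    have hA : (p.concat (ray_adj hr n)).IsPath := by
      refine isPath_concat hp (ray_adj hr n) ?_
      intro hmem
      have := dist_support_le hmem
      rw [hlp] at this; omega
    have hB : (q.concat (ray_adj hr (n+1)).symm).IsPath := by
      refine isPath_concat hq (ray_adj hr (n+1)).symm ?_
      intro hmem
      have := dist_support_le hmem
      rw [hlq] at this; omega
    have hAB := (hT.existsUnique_path w (r (n+1))).unique hA hB
    have hmemA : r n ∈ (p.concat (ray_adj hr n)).support := by
      rw [SimpleGraph.Walk.support_concat]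
      exact List.mem_append.2 (Or.inl p.end_mem_support)
    rw [hAB, SimpleGraph.Walk.support_concat] at hmemA
    rcases List.mem_append.1 hmemA with hm | hm
    · have := dist_support_le hm
      rw [hlq] at this
      omega
    · have : r n = r (n+1) := List.mem_singleton.1 hm
      have h0 : G.dist (r n) (r (n+1)) = 0 := by rw [← this]; exact SimpleGraph.dist_self
      omega

lemma ray_eventually_incr (hT : G.IsTree) (w : V) :
    ∃ N, ∀ n, N ≤ n → G.dist w (r (n + 1)) = G.dist w (r n) + 1 := by
  -- there is a first increase
  have hex : ∃ n, G.dist w (r (n + 1)) = G.dist w (r n) + 1 := by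
    by_contra hno
    push_neg at hno
    have hdec : ∀ n, G.dist w (r (n + 1)) + 1 = G.dist w (r n) := by
      intro n
      rcases adj_dist_cases hT (ray_adj hr n) w with hc | hc
      · rw [SimpleGraph.dist_comm (u := r n), SimpleGraph.dist_comm (u := r (n+1))] at hc
        omega
      · rw [SimpleGraph.dist_comm (u := r n), SimpleGraph.dist_comm (u := r (n+1))] at hc
        exact absurd hc (hno n)
    have hall : ∀ n, G.dist w (r n) + n = G.dist w (r 0) := by
      intro n
      induction n with
      | zero => rfl
      | succ k ih => have := hdec k; omega
    have := hall (G.dist w (r 0) + 1)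
    omega
  obtain ⟨n₀, hn₀⟩ := hex
  refine ⟨n₀, fun n hn => ?_⟩
  induction n with
  | zero => simpa [Nat.le_zero.1 hn] using hn₀
  | succ k ih =>
    rcases Nat.lt_or_ge n₀ (k+1) with h | h
    · have hk := ih (by omega)
      exact ray_incr_step hr hT w hk
    · have : n₀ = k + 1 := by omega
      rw [← this]; exact hn₀

end RayLemmas

lemma cofinal_eventually_iff {x y : ℕ → V} (h : Cofinal x y) (P : V → Prop) :
    (∀ᶠ n in atTop, P (x n)) ↔ (∀ᶠ n in atTop, P (y n)) := by
  obtain ⟨a, b, hab⟩ := h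
  rw [eventually_atTop] at hab
  obtain ⟨N, hN⟩ := hab
  constructor
  · intro hx
    rw [eventually_atTop] at hx ⊢
    obtain ⟨M, hM⟩ := hx
    refine ⟨N + M + a, fun n hn => ?_⟩
    have h1 := hN (n - a) (by omega)
    have h2 := hM (n - a + b) (by omega)
    rw [show n - a + a = n by omega] at h1
    rw [h1]; exact h2
  · intro hy
    rw [eventually_atTop] at hy ⊢
    obtain ⟨M, hM⟩ := hy
    refine ⟨N + M + b, fun n hn => ?_⟩
    have h1 := hN (n - b) (by omega)
    have h2 := hM (n - b + a) (by omega)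
    rw [show n - b + b = n by omega] at h1
    rw [← h1]; exact h2

lemma mem_shadow_iff {u v : V} {r : Ray G} :
    Boundary.mk G r ∈ Shadow G u v ↔ ∀ᶠ n in atTop, r.1 n ∈ Side G u v := by
  constructor
  · rintro ⟨s, hs, hev⟩
    have heq : Relation.EqvGen (fun r s : Ray G => Cofinal r.1 s.1) s r := Quot.eq.1 hs
    have key : ∀ {p q : Ray G}, Relation.EqvGen (fun r s : Ray G => Cofinal r.1 s.1) p q →
        ((∀ᶠ n in atTop, p.1 n ∈ Side G u v) ↔ (∀ᶠ n in atTop, q.1 n ∈ Side G u v)) := by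
      intro p q h
      induction h with
      | rel _ _ hpq => exact cofinal_eventually_iff hpq _
      | refl => exact Iff.rfl
      | symm _ _ _ ih => exact ih.symm
      | trans _ _ _ _ _ ih1 ih2 => exact ih1.trans ih2
    exact (key heq).1 hev
  · intro h
    exact ⟨r, rfl, h⟩

lemma ray_mem_own_shadow {r : Ray G} (N : ℕ) :
    Boundary.mk G r ∈ Shadow G (r.1 N) (r.1 (N + 1)) := by
  refine ⟨r, rfl, ?_⟩
  rw [eventually_atTop]
  refine ⟨N + 2, fun n hn => ?_⟩
  rw [ray_dist r.2 (N+1) n (by omega), ray_dist r.2 N n (by omega)]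
  omega

lemma shadow_mono {u v x y : V} (h : Side G x y ⊆ Side G u v) :
    Shadow G x y ⊆ Shadow G u v := by
  rintro ξ ⟨s, hs, hev⟩
  exact ⟨s, hs, hev.mono fun n hn => h hn⟩

lemma shadow_isOpen {u v : V} (huv : G.Adj u v) : IsOpen (Shadow G u v) :=
  TopologicalSpace.GenerateOpen.basic _ ⟨u, v, huv, rfl⟩



def Deeper (G : SimpleGraph V) (x y u v : V) : Prop :=
  x ∈ Side G u v ∧ y ∈ Side G u v ∧
    G.dist u y = G.dist u x + 1 ∧ G.dist v y = G.dist v x + 1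

lemma cut' (hT : G.IsTree) {x y : V} (hxy : G.Adj x y) {w z : V}
    (hw : G.dist x w < G.dist y w) (hz : z ∈ Side G x y) :
    G.dist w z = G.dist w x + 1 + G.dist y z :=
  cut hT hxy hw hz

lemma deeper_trans (hT : G.IsTree) {u v x y s t : V} (huv : G.Adj u v) (hxy : G.Adj x y)
    (h1 : Deeper G s t x y) (h2 : Deeper G x y u v) : Deeper G s t u v := by
  obtain ⟨hs, ht, hys, hyt⟩ := h1
  obtain ⟨hx, hy, hux, hvx⟩ := h2
  have hsub : Side G x y ⊆ Side G u v := side_nested hT huv hxy hx hy hux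
  have hwu : G.dist x u < G.dist y u := by
    have c1 : G.dist x u = G.dist u x := SimpleGraph.dist_comm
    have c2 : G.dist y u = G.dist u y := SimpleGraph.dist_comm
    omega
  have hwv : G.dist x v < G.dist y v := by
    have c1 : G.dist x v = G.dist v x := SimpleGraph.dist_comm
    have c2 : G.dist y v = G.dist v y := SimpleGraph.dist_comm
    omega
  have cu_s := cut' hT hxy hwu hs
  have cu_t := cut' hT hxy hwu ht
  have cv_s := cut' hT hxy hwv hs
  have cv_t := cut' hT hxy hwv ht
  exact ⟨hsub hs, hsub ht, by omega, by omega⟩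

lemma find_edge_single (hT : G.IsTree) {u v : V} (huv : G.Adj u v) {s : Ray G}
    (hs : ∀ᶠ n in atTop, s.1 n ∈ Side G u v) :
    ∃ N₀, ∀ N, N₀ ≤ N → Shadow G (s.1 N) (s.1 (N + 1)) ⊆ Shadow G u v ∧
      Deeper G (s.1 N) (s.1 (N + 1)) u v := by
  obtain ⟨Nu, hNu⟩ := ray_eventually_incr s.2 hT u
  obtain ⟨Nv, hNv⟩ := ray_eventually_incr s.2 hT v
  rw [eventually_atTop] at hs
  obtain ⟨Ns, hNs⟩ := hs
  refine ⟨Nu + Nv + Ns, fun N hN => ?_⟩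
  have h1 : s.1 N ∈ Side G u v := hNs N (by omega)
  have h2 : s.1 (N + 1) ∈ Side G u v := hNs (N + 1) (by omega)
  have h3 : G.dist u (s.1 (N + 1)) = G.dist u (s.1 N) + 1 := hNu N (by omega)
  have h4 : G.dist v (s.1 (N + 1)) = G.dist v (s.1 N) + 1 := hNv N (by omega)
  exact ⟨shadow_mono (side_nested hT huv (ray_adj s.2 N) h1 h2 h3), h1, h2, h3, h4⟩

lemma find_edge (hT : G.IsTree) {O : Set (Boundary G)} (hO : IsOpen O) {s : Ray G}
    (hs : Boundary.mk G s ∈ O) :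
    ∃ N₀, ∀ N, N₀ ≤ N → Shadow G (s.1 N) (s.1 (N + 1)) ⊆ O := by
  have hbasis := TopologicalSpace.isTopologicalBasis_of_subbasis
    (t := instTopologicalSpaceBoundary G) rfl
  obtain ⟨B, hB, hmem, hBO⟩ := hbasis.exists_subset_of_mem_open hs hO
  obtain ⟨f, ⟨hfin, hfsub⟩, rfl⟩ := hB
  suffices h : ∃ N₀, ∀ N, N₀ ≤ N → Shadow G (s.1 N) (s.1 (N + 1)) ⊆ ⋂₀ f by
    obtain ⟨N₀, hN₀⟩ := h
    exact ⟨N₀, fun N hN => (hN₀ N hN).trans hBO⟩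
  clear hBO
  have key := Set.Finite.induction_on
    (motive := fun f _ => f ⊆ {t | ∃ u v : V, G.Adj u v ∧ t = Shadow G u v} →
      Boundary.mk G s ∈ ⋂₀ f →
      ∃ N₀, ∀ N, N₀ ≤ N → Shadow G (s.1 N) (s.1 (N + 1)) ⊆ ⋂₀ f) f hfin
    (fun _ _ => ⟨0, fun N _ => by simp⟩) ?_
  · exact key hfsub hmem
  · rintro t f htf hfin ih hsub hmem
    obtain ⟨u, v, huv, rfl⟩ := hsub (Set.mem_insert _ _)
    rw [Set.sInter_insert] at hmem ⊢
    obtain ⟨N₁, hN₁⟩ := find_edge_single hT huv (mem_shadow_iff.1 hmem.1)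
    obtain ⟨N₂, hN₂⟩ := ih (fun x hx => hsub (Set.mem_insert_of_mem _ hx)) hmem.2
    exact ⟨N₁ + N₂, fun N hN =>
      Set.subset_inter ((hN₁ N (by omega)).1) (hN₂ N (by omega))⟩

lemma step_exists (hT : G.IsTree) {u v : V} (huv : G.Adj u v) {r : Ray G}
    (hr : Boundary.mk G r ∈ Shadow G u v) (O : Set (Boundary G)) (hO : IsOpen O)
    (hd : Dense O) :
    ∃ (x y : V) (s : Ray G), G.Adj x y ∧ Boundary.mk G s ∈ Shadow G x y ∧
      Shadow G x y ⊆ O ∩ Shadow G u v ∧ Deeper G x y u v := by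
  have hne : (Shadow G u v ∩ O).Nonempty :=
    hd.inter_open_nonempty _ (shadow_isOpen huv) ⟨_, hr⟩
  obtain ⟨ξ, hξS, hξO⟩ := hne
  obtain ⟨s, rfl⟩ := Quot.exists_rep ξ
  have hsS : Boundary.mk G s ∈ Shadow G u v := hξS
  have hsO : Boundary.mk G s ∈ O ∩ Shadow G u v := ⟨hξO, hξS⟩
  obtain ⟨N₁, hN₁⟩ := find_edge hT (hO.inter (shadow_isOpen huv)) hsO
  obtain ⟨N₂, hN₂⟩ := find_edge_single hT huv (mem_shadow_iff.1 hsS)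
  refine ⟨s.1 (N₁ + N₂), s.1 (N₁ + N₂ + 1), s, ray_adj s.2 _, ray_mem_own_shadow _,
    hN₁ _ (by omega), (hN₂ _ (by omega)).2⟩


section GetVert
open SimpleGraph

lemma getVert_dist_le₁ (hT : G.IsTree) {a b : V} (w : G.Walk a b) :
    ∀ i : ℕ, G.dist a (w.getVert i) ≤ i := by
  induction w with
  | nil => intro i; simp [SimpleGraph.Walk.getVert, SimpleGraph.dist_self]
  | @cons a a₁ b h p ih =>
    intro i
    cases i with
    | zero => simp [SimpleGraph.dist_self]
    | succ i =>
      rw [SimpleGraph.Walk.getVert_cons_succ]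
      have t : G.dist a (p.getVert i) ≤ G.dist a a₁ + G.dist a₁ (p.getVert i) :=
        (hT.isConnected).dist_triangle
      have h1 : G.dist a a₁ = 1 := SimpleGraph.dist_eq_one_iff_adj.2 h
      have := ih i
      omega

lemma getVert_dist_le₂ (hT : G.IsTree) {a b : V} (w : G.Walk a b) :
    ∀ i : ℕ, G.dist (w.getVert i) b ≤ w.length - i := by
  induction w with
  | nil => intro i; simp [SimpleGraph.Walk.getVert, SimpleGraph.dist_self]
  | @cons a a₁ b h p ih =>
    intro i
    cases i with
    | zero =>
      simpa using SimpleGraph.dist_le (SimpleGraph.Walk.cons h p)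
    | succ i =>
      rw [SimpleGraph.Walk.getVert_cons_succ, SimpleGraph.Walk.length_cons]
      have := ih i
      omega

lemma getVert_spec (hT : G.IsTree) {a b : V} {w : G.Walk a b} (hw : w.length = G.dist a b)
    {i : ℕ} (hi : i ≤ w.length) :
    G.dist a (w.getVert i) = i ∧ G.dist (w.getVert i) b = w.length - i := by
  have t : G.dist a b ≤ G.dist a (w.getVert i) + G.dist (w.getVert i) b :=
    (hT.isConnected).dist_triangle
  have h1 := getVert_dist_le₁ hT w i
  have h2 := getVert_dist_le₂ hT w i
  omega

lemma getVert_step {a b : V} (w : G.Walk a b) (i : ℕ) :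
    G.dist (w.getVert i) (w.getVert (i + 1)) ≤ 1 := by
  rcases Nat.lt_or_ge i w.length with h | h
  · exact le_of_eq (SimpleGraph.dist_eq_one_iff_adj.2 (w.adj_getVert_succ h))
  · rw [w.getVert_of_length_le h, w.getVert_of_length_le (by omega)]
    simp [SimpleGraph.dist_self]

lemma getVert_dist_le (hT : G.IsTree) {a b : V} (w : G.Walk a b) (i : ℕ) :
    ∀ j, i ≤ j → G.dist (w.getVert i) (w.getVert j) ≤ j - i := by
  intro j
  induction j with
  | zero => intro hj; have : i = 0 := by omega
            simp [this, SimpleGraph.dist_self]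
  | succ j ih =>
    intro hj
    rcases Nat.lt_or_ge j i with h | h
    · have : i = j + 1 := by omega
      simp [this, SimpleGraph.dist_self]
    · have t : G.dist (w.getVert i) (w.getVert (j+1)) ≤
          G.dist (w.getVert i) (w.getVert j) + G.dist (w.getVert j) (w.getVert (j+1)) :=
        (hT.isConnected).dist_triangle
      have := ih h
      have := getVert_step w j
      omega

end GetVert


end TreeBaire

section Statements

variable {V : Type*}

theorem statement7 [Countable V] (G : SimpleGraph V) (hT : G.IsTree) :
    BaireSpace (Boundary G) := by
  open TreeBaire in
  classical
  constructor
  intro f hfo hfd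
  rw [dense_iff_inter_open]
  rintro W hW ⟨ξ₀, hξ₀⟩
  obtain ⟨r₀, rfl⟩ := Quot.exists_rep ξ₀
  obtain ⟨N₀, hN₀⟩ := find_edge hT hW (hξ₀ : Boundary.mk G r₀ ∈ W)
  -- the recursive sequence of edges
  let D := {p : (V × V) × Ray G // G.Adj p.1.1 p.1.2 ∧ Boundary.mk G p.2 ∈ Shadow G p.1.1 p.1.2}
  have hstep : ∀ (p : D) (k : ℕ), ∃ q : D,
      Shadow G q.1.1.1 q.1.1.2 ⊆ f k ∩ Shadow G p.1.1.1 p.1.1.2 ∧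
        Deeper G q.1.1.1 q.1.1.2 p.1.1.1 p.1.1.2 := by
    rintro ⟨⟨⟨u, v⟩, r⟩, huv, hr⟩ k
    obtain ⟨x, y, s, hxy, hmem, hsub, hdeep⟩ := step_exists hT huv hr (f k) (hfo k) (hfd k)
    exact ⟨⟨((x, y), s), hxy, hmem⟩, hsub, hdeep⟩
  let d₀ : D := ⟨((r₀.1 N₀, r₀.1 (N₀ + 1)), r₀), ray_adj r₀.2 _, ray_mem_own_shadow _⟩
  let seq : ℕ → D := fun k => Nat.rec d₀ (fun k p => Classical.choose (hstep p k)) k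
  let a : ℕ → V := fun k => (seq k).1.1.1
  let b : ℕ → V := fun k => (seq k).1.1.2
  have hadj : ∀ k, G.Adj (a k) (b k) := fun k => (seq k).2.1
  have hspec : ∀ k, Shadow G (a (k+1)) (b (k+1)) ⊆ f k ∩ Shadow G (a k) (b k) ∧
      Deeper G (a (k+1)) (b (k+1)) (a k) (b k) := fun k =>
    Classical.choose_spec (hstep (seq k) k)
  have hsub : ∀ k, Shadow G (a (k+1)) (b (k+1)) ⊆ f k ∩ Shadow G (a k) (b k) :=
    fun k => (hspec k).1
  have hdeep : ∀ k, Deeper G (a (k+1)) (b (k+1)) (a k) (b k) := fun k => (hspec k).2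
  have hW0 : Shadow G (a 0) (b 0) ⊆ W := hN₀ N₀ le_rfl
  -- all-pairs deeper
  have hdeep_all : ∀ j k, j < k → Deeper G (a k) (b k) (a j) (b j) := by
    intro j k hjk
    induction k with
    | zero => omega
    | succ k ih =>
      rcases Nat.lt_or_ge j k with h | h
      · exact deeper_trans hT (hadj j) (hadj k) (hdeep k) (ih h)
      · have : j = k := by omega
        rw [this]; exact hdeep k
  -- geodesics between successive b's
  have hgeod : ∀ k, ∃ p : G.Walk (b k) (b (k+1)), p.IsPath ∧ p.length = G.dist (b k) (b (k+1)) :=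
    fun k => exists_geod hT _ _
  let w : ∀ k, G.Walk (b k) (b (k+1)) := fun k => Classical.choose (hgeod k)
  have hwlen : ∀ k, (w k).length = G.dist (b k) (b (k+1)) :=
    fun k => (Classical.choose_spec (hgeod k)).2
  let L : ℕ → ℕ := fun k => G.dist (b k) (b (k+1))
  have hLdef : ∀ k, L k = G.dist (b k) (b (k+1)) := fun _ => rfl
  have hLpos : ∀ k, 1 ≤ L k := by
    intro k
    have h4 := (hdeep k).2.2.2
    have := hLdef k
    omega
  let d : ℕ → ℕ := fun k => G.dist (b 0) (b k)
  have hd0 : d 0 = 0 := SimpleGraph.dist_self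
  have hadd : ∀ j k, j ≤ k → G.dist (b j) (b (k+1)) = G.dist (b j) (b k) + L k := by
    intro j k hjk
    rcases Nat.lt_or_ge j k with h | h
    · have hD := hdeep_all j k h
      have hw' : G.dist (a k) (b j) < G.dist (b k) (b j) := by
        have h4 := hD.2.2.2
        have c1 : G.dist (a k) (b j) = G.dist (b j) (a k) := SimpleGraph.dist_comm
        have c2 : G.dist (b k) (b j) = G.dist (b j) (b k) := SimpleGraph.dist_comm
        omega
      have := cut' hT (hadj k) hw' ((hdeep k).2.1)
      have h4 := hD.2.2.2
      have := hLdef k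
      omega
    · have : j = k := by omega
      rw [this]
      have h0 : G.dist (b k) (b k) = 0 := SimpleGraph.dist_self
      have := hLdef k
      omega
  have hd : ∀ k, d (k+1) = d k + L k := fun k => hadd 0 k (Nat.zero_le k)
  have hk_le_d : ∀ k, k ≤ d k := by
    intro k
    induction k with
    | zero => omega
    | succ k ih => have := hd k; have := hLpos k; omega
  have hdist_bb : ∀ j k, j ≤ k → G.dist (b j) (b k) + d j = d k := by
    intro j k hjk
    induction k with
    | zero =>
      have : j = 0 := by omega
      subst this
      have h0 : G.dist (b 0) (b 0) = 0 := SimpleGraph.dist_self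
      omega
    | succ k ih =>
      rcases Nat.lt_or_ge j (k+1) with h | h
      · have h1 := hadd j k (by omega)
        have h2 := ih (by omega)
        have h3 := hd k
        omega
      · have : j = k + 1 := by omega
        subst this
        have h0 : G.dist (b (k+1)) (b (k+1)) = 0 := SimpleGraph.dist_self
        omega
  -- the limit ray
  let c : ℕ → ℕ := fun n => Nat.findGreatest (fun k => d k ≤ n) n
  have hc₁ : ∀ n, d (c n) ≤ n := fun n =>
    Nat.findGreatest_spec (P := fun k => d k ≤ n) (Nat.zero_le n)
      (le_trans (le_of_eq hd0) (Nat.zero_le n))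
  have hc₂ : ∀ n, n < d (c n + 1) := by
    intro n
    by_contra hcon
    push_neg at hcon
    have h1 : c n + 1 ≤ n := le_trans (hk_le_d _) hcon
    have h2 : c n + 1 ≤ c n := Nat.le_findGreatest h1 hcon
    omega
  have hcmono : ∀ m n, m ≤ n → c m ≤ c n := by
    intro m n hmn
    exact Nat.le_findGreatest (le_trans (Nat.findGreatest_le m) hmn)
      (le_trans (hc₁ m) hmn)
  let x : ℕ → V := fun n => (w (c n)).getVert (n - d (c n))
  have hibound : ∀ n, n - d (c n) ≤ (w (c n)).length := by
    intro n
    rw [hwlen]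
    have := hc₂ n
    have := hd (c n)
    have := hLdef (c n)
    omega
  have hxd₁ : ∀ n, G.dist (b (c n)) (x n) = n - d (c n) :=
    fun n => (getVert_spec hT (hwlen (c n)) (hibound n)).1
  have hxd₂ : ∀ n, G.dist (x n) (b (c n + 1)) = d (c n + 1) - n := by
    intro n
    have h := (getVert_spec hT (hwlen (c n)) (hibound n)).2
    rw [hwlen] at h
    have h1 := hd (c n)
    have h2 := hc₁ n
    have h3 := hLdef (c n)
    rw [h]
    omega
  have hside : ∀ k n, k ≤ c n → x n ∈ Side G (a k) (b k) := by
    intro k n hk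
    have hbcn : b (c n) ∈ Side G (a k) (b k) := by
      rcases Nat.lt_or_ge k (c n) with h | h
      · exact (hdeep_all k (c n) h).2.1
      · have hkeq : k = c n := by omega
        rw [hkeq]
        show G.dist (b (c n)) (b (c n)) < G.dist (a (c n)) (b (c n))
        have h0 : G.dist (b (c n)) (b (c n)) = 0 := SimpleGraph.dist_self
        have h1 : G.dist (a (c n)) (b (c n)) = 1 :=
          SimpleGraph.dist_eq_one_iff_adj.2 (hadj (c n))
        omega
    have hbcn1 : b (c n + 1) ∈ Side G (a k) (b k) := (hdeep_all k (c n + 1) (by omega)).2.1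
    refine side_convex hT (hadj k) hbcn hbcn1 ?_
    have h1 := hxd₁ n
    have h2 := hxd₂ n
    have h3 := hc₁ n
    have h4 := hc₂ n
    have h5 := hd (c n)
    have h6 := hLdef (c n)
    omega
  have hb0x : ∀ n, G.dist (b 0) (x n) = n := by
    intro n
    rcases Nat.eq_zero_or_pos (c n) with h0 | hpos
    · have := hxd₁ n
      rw [h0] at this
      omega
    · have hw' : G.dist (a (c n)) (b 0) < G.dist (b (c n)) (b 0) := by
        have hD := hdeep_all 0 (c n) hpos
        have h4 := hD.2.2.2
        have c1 : G.dist (a (c n)) (b 0) = G.dist (b 0) (a (c n)) := SimpleGraph.dist_comm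
        have c2 : G.dist (b (c n)) (b 0) = G.dist (b 0) (b (c n)) := SimpleGraph.dist_comm
        omega
      have hcut := cut' hT (hadj (c n)) hw' (hside (c n) n le_rfl)
      have hD := hdeep_all 0 (c n) hpos
      have h4 := hD.2.2.2
      have h5 := hdist_bb 0 (c n) (Nat.zero_le _)
      have h6 := hxd₁ n
      have h7 := hc₁ n
      -- hcut : dist (b 0) (x n) = dist (b 0) (a (c n)) + 1 + dist (b (c n)) (x n)
      omega
  have hub : ∀ m n, m ≤ n → G.dist (x m) (x n) ≤ n - m := by
    intro m n hmn
    have hjk := hcmono m n hmn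
    rcases Nat.eq_or_lt_of_le hjk with heq | hlt
    · -- same geodesic segment
      have hx1 : x m = (w (c n)).getVert (m - d (c n)) := by
        show (w (c m)).getVert (m - d (c m)) = _
        rw [heq]
      have hx2 : x n = (w (c n)).getVert (n - d (c n)) := rfl
      rw [hx1, hx2]
      have := getVert_dist_le hT (w (c n)) (m - d (c n)) (n - d (c n))
        (by have := hc₁ m; rw [heq] at this; omega)
      have h3 := hc₁ m
      rw [heq] at h3
      omega
    · have t1 : G.dist (x m) (x n) ≤ G.dist (x m) (b (c m + 1)) +
          G.dist (b (c m + 1)) (x n) := (hT.isConnected).dist_triangle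
      have t2 : G.dist (b (c m + 1)) (x n) ≤ G.dist (b (c m + 1)) (b (c n)) +
          G.dist (b (c n)) (x n) := (hT.isConnected).dist_triangle
      have h1 := hxd₂ m
      have h2 := hdist_bb (c m + 1) (c n) hlt
      have h3 := hxd₁ n
      have h4 := hc₂ m
      have h5 := hc₁ n
      have h6 : d (c m + 1) ≤ d (c n) := by omega
      omega
  have hxray : IsRay G x := by
    intro m n
    rcases le_total m n with h | h
    · have h1 := hub m n h
      have h2 := hb0x n
      have h3 := hb0x m
      have t : G.dist (b 0) (x n) ≤ G.dist (b 0) (x m) + G.dist (x m) (x n) :=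
        (hT.isConnected).dist_triangle
      omega
    · have h1 := hub n m h
      have h2 := hb0x n
      have h3 := hb0x m
      have t : G.dist (b 0) (x m) ≤ G.dist (b 0) (x n) + G.dist (x n) (x m) :=
        (hT.isConnected).dist_triangle
      have c1 : G.dist (x m) (x n) = G.dist (x n) (x m) := SimpleGraph.dist_comm
      omega
  have hfinal : ∀ k, Boundary.mk G ⟨x, hxray⟩ ∈ Shadow G (a k) (b k) := by
    intro k
    refine ⟨⟨x, hxray⟩, rfl, ?_⟩
    rw [eventually_atTop]
    refine ⟨d (k+1), fun n hn => ?_⟩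
    have hkc : k + 1 ≤ c n := Nat.le_findGreatest (le_trans (hk_le_d _) hn) hn
    exact hside k n (by omega)
  refine ⟨Boundary.mk G ⟨x, hxray⟩, hW0 (hfinal 0), ?_⟩
  rw [Set.mem_iInter]
  intro k
  exact ((hsub k) (hfinal (k+1))).1


end Statements
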